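/- Let G ∈ ℝ^{p×n}, w₀ ∈ ℝⁿ with positive entries, G₀ = G·diag(w₀)·Gᵀ invertible, and Q = diag(w₀)·Gᵀ·G₀⁻¹·G·diag(w₀). Then for any w with positive entries and G·diag(w)·Gᵀ invertible, tr(G₀·(G·diag(w)·Gᵀ)⁻¹) ≤ tr(Q·diag(w)⁻¹), with equality at w = w₀. -/

import Mathlib

open Matrix

set_option maxHeartbeats 1000000

private lemma trace_transpose_mul_self_nonneg {k m : ℕ} (A : Matrix (Fin k) (Fin m) ℝ) :
    0 ≤ (Aᵀ * A).trace := by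
  rw [Matrix.trace]
  refine Finset.sum_nonneg fun i _ => ?_
  rw [Matrix.diag_apply, Matrix.mul_apply]
  refine Finset.sum_nonneg fun j _ => ?_
  simp only [Matrix.transpose_apply]
  exact mul_self_nonneg _

private lemma trace_mul_nonneg_of_posSemidef {m : ℕ} {A B : Matrix (Fin m) (Fin m) ℝ}
    (hA : A.PosSemidef) (hB : B.PosSemidef) : 0 ≤ (A * B).trace := by
  open scoped MatrixOrder Matrix.Norms.L2Operator in
  obtain ⟨C, rfl⟩ : ∃ C : Matrix (Fin m) (Fin m) ℝ, A = Cᴴ * C :=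
    CStarAlgebra.nonneg_iff_eq_star_mul_self.mp hA.nonneg
  open scoped MatrixOrder Matrix.Norms.L2Operator in
  obtain ⟨D, rfl⟩ : ∃ C : Matrix (Fin m) (Fin m) ℝ, B = Cᴴ * C :=
    CStarAlgebra.nonneg_iff_eq_star_mul_self.mp hB.nonneg
  have : (Cᴴ * C * (Dᴴ * D)).trace = ((D * Cᴴ)ᵀ * (D * Cᴴ)).trace := by
    rw [Matrix.transpose_mul]
    have h1 : (Cᴴ * C * (Dᴴ * D)).trace = ((C * (Dᴴ * D)) * Cᴴ).trace := by
      rw [Matrix.mul_assoc]; exact Matrix.trace_mul_comm _ _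
    rw [h1]
    congr 1
    show C * (Dᵀ * D) * Cᵀ = Cᵀᵀ * Dᵀ * (D * Cᵀ)
    rw [Matrix.transpose_transpose]
    simp only [Matrix.mul_assoc]
  rw [this]
  exact trace_transpose_mul_self_nonneg _

private lemma diag_mul_inv_one {m : ℕ} {v : Fin m → ℝ} (hv : ∀ i, v i ≠ 0) :
    Matrix.diagonal v * Matrix.diagonal (fun i => (v i)⁻¹) = 1 := by
  rw [Matrix.diagonal_mul_diagonal]
  have : (fun i => v i * (v i)⁻¹) = fun _ => (1 : ℝ) :=
    funext fun i => mul_inv_cancel₀ (hv i)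
  rw [this, Matrix.diagonal_one]

private lemma inv_diag_mul_one {m : ℕ} {v : Fin m → ℝ} (hv : ∀ i, v i ≠ 0) :
    Matrix.diagonal (fun i => (v i)⁻¹) * Matrix.diagonal v = 1 := by
  rw [Matrix.diagonal_mul_diagonal]
  have : (fun i => (v i)⁻¹ * v i) = fun _ => (1 : ℝ) :=
    funext fun i => inv_mul_cancel₀ (hv i)
  rw [this, Matrix.diagonal_one]

theorem trace_inverse_majorization {p n : ℕ} (G : Matrix (Fin p) (Fin n) ℝ)
    (w w₀ : Fin n → ℝ) (hw : ∀ i, 0 < w i) (hw₀ : ∀ i, 0 < w₀ i)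
    (h₀ : IsUnit (G * Matrix.diagonal w₀ * Gᵀ))
    (h : IsUnit (G * Matrix.diagonal w * Gᵀ)) :
    ((G * Matrix.diagonal w₀ * Gᵀ) * (G * Matrix.diagonal w * Gᵀ)⁻¹).trace ≤
      ((Matrix.diagonal w₀ * Gᵀ * (G * Matrix.diagonal w₀ * Gᵀ)⁻¹ * G * Matrix.diagonal w₀) *
        (Matrix.diagonal w)⁻¹).trace ∧
    ((G * Matrix.diagonal w₀ * Gᵀ) * (G * Matrix.diagonal w₀ * Gᵀ)⁻¹).trace =
      ((Matrix.diagonal w₀ * Gᵀ * (G * Matrix.diagonal w₀ * Gᵀ)⁻¹ * G * Matrix.diagonal w₀) *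
        (Matrix.diagonal w₀)⁻¹).trace := by
  set D := Matrix.diagonal w with hD
  set D₀ := Matrix.diagonal w₀ with hD₀
  set A := G * D₀ * Gᵀ with hA
  set B := G * D * Gᵀ with hB
  have hAdet : IsUnit A.det := (Matrix.isUnit_iff_isUnit_det A).mp h₀
  have hBdet : IsUnit B.det := (Matrix.isUnit_iff_isUnit_det B).mp h
  have hAinv : A * A⁻¹ = 1 := Matrix.mul_nonsing_inv A hAdet
  have hinvB : B⁻¹ * B = 1 := Matrix.nonsing_inv_mul B hBdet
  -- B is symmetric
  have hBsymm : Bᵀ = B := by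
    rw [hB, Matrix.transpose_mul, Matrix.transpose_mul, Matrix.transpose_transpose,
      Matrix.diagonal_transpose, Matrix.mul_assoc]
  have hBinvSymm : (B⁻¹)ᵀ = B⁻¹ := by
    rw [Matrix.transpose_nonsing_inv, hBsymm]
  -- A⁻¹ is PSD
  have hApsd : A.PosSemidef := by
    have : (D₀).PosSemidef := Matrix.posSemidef_diagonal_iff.mpr fun i => (hw₀ i).le
    exact this.mul_mul_conjTranspose_same G
  have hAinvPsd : (A⁻¹).PosSemidef := hApsd.inv
  -- Q is PSD
  set Q := D₀ * Gᵀ * A⁻¹ * G * D₀ with hQ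
  have hQpsd : Q.PosSemidef := by
    have h2 := hAinvPsd.conjTranspose_mul_mul_same (G * D₀)
    have heq : (G * D₀)ᴴ * A⁻¹ * (G * D₀) = Q := by
      show (G * D₀)ᵀ * A⁻¹ * (G * D₀) = Q
      rw [Matrix.transpose_mul, Matrix.diagonal_transpose, hQ]
      simp only [Matrix.mul_assoc]
      rfl
    rwa [heq] at h2
  -- G * Q * Gᵀ = A
  have hGQG : G * Q * Gᵀ = A := by
    have h3 : G * Q * Gᵀ = A * A⁻¹ * A := by
      rw [hQ, hA]; simp only [Matrix.mul_assoc]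
    rw [h3, hAinv, Matrix.one_mul]
  -- square root of D
  set R := Matrix.diagonal (fun i => Real.sqrt (w i)) with hR
  set R' := Matrix.diagonal (fun i => (Real.sqrt (w i))⁻¹) with hR'
  have hRR : R * R = D := by
    rw [hR, hD, Matrix.diagonal_mul_diagonal]
    have : (fun i => Real.sqrt (w i) * Real.sqrt (w i)) = w :=
      funext fun i => Real.mul_self_sqrt (hw i).le
    rw [this]
  have hsqrtne : ∀ i, Real.sqrt (w i) ≠ 0 := fun i => (Real.sqrt_pos.mpr (hw i)).ne'
  have hRR' : R * R' = 1 := diag_mul_inv_one hsqrtne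
  have hR'R : R' * R = 1 := inv_diag_mul_one hsqrtne
  have hDinv : D⁻¹ = R' * R' := by
    apply Matrix.inv_eq_right_inv
    rw [← hRR]
    calc R * R * (R' * R') = R * (R * R' * R') := by simp only [Matrix.mul_assoc]
    _ = 1 := by rw [hRR', Matrix.one_mul, hRR']
  have hRsymm : Rᵀ = R := Matrix.diagonal_transpose _
  have hR'symm : R'ᵀ = R' := Matrix.diagonal_transpose _
  -- the projection
  set P := R * Gᵀ * B⁻¹ * G * R with hP
  have hPsymm : Pᵀ = P := by
    rw [hP]
    simp only [Matrix.transpose_mul, Matrix.transpose_transpose, hRsymm, hBinvSymm,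
      Matrix.mul_assoc]
  have hPidem : P * P = P := by
    have key : G * R * (R * Gᵀ) = B := by
      rw [hB, ← hRR]; simp only [Matrix.mul_assoc]
    calc P * P = R * Gᵀ * B⁻¹ * (G * R * (R * Gᵀ)) * B⁻¹ * G * R := by
          rw [hP]; simp only [Matrix.mul_assoc]
    _ = R * Gᵀ * ((B⁻¹ * B) * B⁻¹) * G * R := by
          rw [key]; simp only [Matrix.mul_assoc]
    _ = P := by rw [hinvB, Matrix.one_mul, hP]
  have hOnePpsd : (1 - P).PosSemidef := by
    have h1 : (1 - P) = (1 - P)ᴴ * (1 - P) := by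
      show (1 - P) = (1 - P)ᵀ * (1 - P)
      rw [Matrix.transpose_sub, Matrix.transpose_one, hPsymm]
      have h2 : (1 - P) * (1 - P) = 1 - P - P + P * P := by noncomm_ring
      rw [h2, hPidem]
      abel
    rw [h1]
    exact Matrix.posSemidef_conjTranspose_mul_self _
  -- D⁻¹ - Gᵀ B⁻¹ G is PSD
  have hSpsd : (D⁻¹ - Gᵀ * B⁻¹ * G).PosSemidef := by
    have heq : R'ᴴ * (1 - P) * R' = D⁻¹ - Gᵀ * B⁻¹ * G := by
      show R'ᵀ * (1 - P) * R' = D⁻¹ - Gᵀ * B⁻¹ * G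
      rw [hR'symm, Matrix.mul_sub, Matrix.mul_one, Matrix.sub_mul, hDinv]
      congr 1
      calc R' * P * R' = (R' * R) * (Gᵀ * (B⁻¹ * (G * (R * R')))) := by
            rw [hP]; simp only [Matrix.mul_assoc]
      _ = Gᵀ * B⁻¹ * G := by
            rw [hR'R, hRR', Matrix.one_mul, Matrix.mul_one, Matrix.mul_assoc]
    rw [← heq]
    exact hOnePpsd.conjTranspose_mul_mul_same R'
  constructor
  · -- inequality
    have hL : (A * B⁻¹).trace = (Q * (Gᵀ * B⁻¹ * G)).trace := by
      rw [← hGQG]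
      calc (G * Q * Gᵀ * B⁻¹).trace = ((G * Q) * (Gᵀ * B⁻¹)).trace := by
            rw [Matrix.mul_assoc]
      _ = ((Gᵀ * B⁻¹) * (G * Q)).trace := Matrix.trace_mul_comm _ _
      _ = ((Gᵀ * B⁻¹ * G) * Q).trace := by simp only [Matrix.mul_assoc]
      _ = (Q * (Gᵀ * B⁻¹ * G)).trace := Matrix.trace_mul_comm _ _
    rw [hL]
    have key : 0 ≤ (Q * (D⁻¹ - Gᵀ * B⁻¹ * G)).trace :=
      trace_mul_nonneg_of_posSemidef hQpsd hSpsd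
    rw [Matrix.mul_sub, Matrix.trace_sub] at key
    linarith
  · -- equality
    have hQD₀ : Q * D₀⁻¹ = D₀ * Gᵀ * A⁻¹ * G := by
      have hDD₀ : D₀ * D₀⁻¹ = 1 := by
        have hinv : D₀⁻¹ = Matrix.diagonal (fun i => (w₀ i)⁻¹) :=
          Matrix.inv_eq_right_inv (diag_mul_inv_one (fun i => (hw₀ i).ne'))
        rw [hinv, hD₀]
        exact diag_mul_inv_one (fun i => (hw₀ i).ne')
      calc Q * D₀⁻¹ = D₀ * Gᵀ * A⁻¹ * G * (D₀ * D₀⁻¹) := by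
            rw [hQ]; simp only [Matrix.mul_assoc]
      _ = D₀ * Gᵀ * A⁻¹ * G := by rw [hDD₀, Matrix.mul_one]
    rw [hQD₀, Matrix.trace_mul_cycle (D₀ * Gᵀ) A⁻¹ G]
    have h4 : G * (D₀ * Gᵀ) * A⁻¹ = A * A⁻¹ := by
      rw [hA]; simp only [Matrix.mul_assoc]
    rw [h4]
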